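/- If G is a traceable graph (i.e., G has a Hamiltonian path) that is not complete, then pc(G) = 2. -/

import Mathlib

open SimpleGraph

/-- An edge-coloring `c` with `k` colors is a *proper connection coloring* of `G`
if every pair of vertices is joined by a path whose consecutive edges have distinct colors. -/
def ProperConnColoring {V : Type*} (G : SimpleGraph V) {k : ℕ} (c : Sym2 V → Fin k) : Prop :=
  ∀ u v : V, ∃ p : G.Walk u v, p.IsPath ∧ (p.edges.map c).Chain' (· ≠ ·)

/-- The proper connection number of `G`. -/
noncomputable def pc {V : Type*} (G : SimpleGraph V) : ℕ :=
  sInf {k | ∃ c : Sym2 V → Fin k, ProperConnColoring G c}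

private lemma chain_indexOf {α : Type*} [DecidableEq α] {L l : List α} (hL : L.Nodup)
    (hl : l <:+: L) :
    l.Chain' (fun x y => L.idxOf x % 2 ≠ L.idxOf y % 2) := by
  refine List.IsChain.infix ?_ hl
  rw [List.isChain_iff_getElem]
  intro i h
  have h1 : i < L.length := by omega
  have h2 : i + 1 < L.length := by omega
  rw [List.Nodup.idxOf_getElem hL, List.Nodup.idxOf_getElem hL]
  omega

private lemma chain_map_of_infix {V : Type*} [DecidableEq V] {G : SimpleGraph V}
    {a b u v : V} {p : G.Walk a b} (hp : p.edges.Nodup) (r : G.Walk u v)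
    (hr : r.edges <:+: p.edges) :
    (r.edges.map (fun e => (⟨p.edges.idxOf e % 2, Nat.mod_lt _ two_pos⟩ : Fin 2))).Chain'
      (· ≠ ·) := by
  unfold List.Chain'
  rw [List.isChain_map]
  refine (chain_indexOf hp hr).imp ?_
  intro x y hxy hc
  exact hxy (by simpa [Fin.ext_iff] using hc)

/-- A traceable noncomplete graph has proper connection number 2. -/
theorem pc_eq_two_of_traceable {V : Type*} [Fintype V] [DecidableEq V] (G : SimpleGraph V)
    (htrace : ∃ (u v : V) (p : G.Walk u v), p.IsHamiltonian ∧ p.IsPath)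
    (hnc : G ≠ ⊤) : pc G = 2 := by
  obtain ⟨a, b, p, hham, hpath⟩ := htrace
  have hsupp : ∀ x : V, x ∈ p.support := by
    intro x
    have := hham x
    rw [← List.count_pos_iff]
    omega
  have hedup : p.edges.Nodup := hpath.edges_nodup
  set c : Sym2 V → Fin 2 := fun e => ⟨p.edges.idxOf e % 2, Nat.mod_lt _ two_pos⟩ with hc
  -- the 2-coloring works
  have h2 : (2 : ℕ) ∈ {k | ∃ c : Sym2 V → Fin k, ProperConnColoring G c} := by
    refine ⟨c, fun u v => ?_⟩
    by_cases huv : u ∈ (p.takeUntil v (hsupp v)).support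
    · refine ⟨(p.takeUntil v (hsupp v)).dropUntil u huv, (hpath.takeUntil _).dropUntil _, ?_⟩
      refine chain_map_of_infix hedup _ ?_
      have h1 : ((p.takeUntil v (hsupp v)).dropUntil u huv).edges
          <:+ (p.takeUntil v (hsupp v)).edges := by
        have := SimpleGraph.Walk.take_spec (p.takeUntil v (hsupp v)) huv
        refine ⟨((p.takeUntil v (hsupp v)).takeUntil u huv).edges, ?_⟩
        rw [← SimpleGraph.Walk.edges_append, this]
      have h2 : (p.takeUntil v (hsupp v)).edges <+: p.edges := by
        have := SimpleGraph.Walk.take_spec p (hsupp v)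
        refine ⟨(p.dropUntil v (hsupp v)).edges, ?_⟩
        rw [← SimpleGraph.Walk.edges_append, this]
      exact h1.isInfix.trans h2.isInfix
    · have hu' : u ∈ (p.dropUntil v (hsupp v)).support := by
        have := hsupp u
        rw [← SimpleGraph.Walk.take_spec p (hsupp v),
          SimpleGraph.Walk.mem_support_append_iff] at this
        tauto
      refine ⟨((p.dropUntil v (hsupp v)).takeUntil u hu').reverse,
        ((hpath.dropUntil _).takeUntil _).reverse, ?_⟩
      unfold List.Chain'
      rw [SimpleGraph.Walk.edges_reverse, List.map_reverse, List.isChain_reverse]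
      have := chain_map_of_infix (u := v) (v := u) hedup
        ((p.dropUntil v (hsupp v)).takeUntil u hu') ?_
      · exact this.imp fun x y h => Ne.symm h
      · have h1 : ((p.dropUntil v (hsupp v)).takeUntil u hu').edges
            <+: (p.dropUntil v (hsupp v)).edges := by
          have := SimpleGraph.Walk.take_spec (p.dropUntil v (hsupp v)) hu'
          refine ⟨((p.dropUntil v (hsupp v)).dropUntil u hu').edges, ?_⟩
          rw [← SimpleGraph.Walk.edges_append, this]
        have h2 : (p.dropUntil v (hsupp v)).edges <:+ p.edges := by
          have := SimpleGraph.Walk.take_spec p (hsupp v)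
          refine ⟨(p.takeUntil v (hsupp v)).edges, ?_⟩
          rw [← SimpleGraph.Walk.edges_append, this]
        exact h1.isInfix.trans h2.isInfix
  -- lower bound: every k in the set is ≥ 2
  obtain ⟨x, y, hxy, hnadj⟩ : ∃ x y : V, x ≠ y ∧ ¬ G.Adj x y := by
    by_contra h
    push_neg at h
    apply hnc
    ext s t
    simp only [top_adj]
    exact ⟨fun h' => h'.ne, fun h' => h s t h'⟩
  have hlb : ∀ k ∈ {k | ∃ c : Sym2 V → Fin k, ProperConnColoring G c}, 2 ≤ k := by
    rintro k ⟨ck, hck⟩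
    by_contra hk
    interval_cases k
    · exact (ck s(a, a)).elim0
    · obtain ⟨q, hq, hchain⟩ := hck x y
      have hlen : q.edges.length ≤ 1 := by
        by_contra hlen
        push_neg at hlen
        match he : q.edges, hchain with
        | e1 :: e2 :: rest, _ =>
          rw [he] at hchain
          simp only [List.map_cons, List.isChain_cons_cons] at hchain
          exact (List.isChain_cons_cons.mp hchain).1 (Subsingleton.elim _ _)
        | [], _ => simp [he] at hlen
        | [e], _ => simp [he] at hlen
      rw [SimpleGraph.Walk.length_edges] at hlen
      interval_cases h : q.length
      · exact hxy (q.eq_of_length_eq_zero h)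
      · exact hnadj (q.adj_of_length_eq_one h)
  have hne : {k | ∃ c : Sym2 V → Fin k, ProperConnColoring G c}.Nonempty := ⟨2, h2⟩
  refine le_antisymm (Nat.sInf_le h2) (hlb _ (Nat.sInf_mem hne))
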